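/- Let G be a graph, let M' be a uniquely restricted matching in an induced subgraph G' = G - {u,v} where uv is an edge of G with u of degree 1 in G. Then M' ∪ {uv} is a uniquely restricted matching in G. -/

import Mathlib

open SimpleGraph

/-- A set of edges `M` is a matching in `G` if all its elements are edges of `G`
and distinct edges of `M` share no endpoint. -/
def IsMatchingSet {V : Type*} (G : SimpleGraph V) (M : Set (Sym2 V)) : Prop :=
  M ⊆ G.edgeSet ∧ M.Pairwise fun e f => ∀ v : V, v ∈ e → v ∉ f

/-- The set of vertices covered by a set of edges. -/
def coveredVerts {V : Type*} (M : Set (Sym2 V)) : Set V := {v | ∃ e ∈ M, v ∈ e}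

/-- A matching is uniquely restricted if no other matching covers the same vertex set. -/
def IsURMatching {V : Type*} (G : SimpleGraph V) (M : Set (Sym2 V)) : Prop :=
  IsMatchingSet G M ∧
    ∀ N : Set (Sym2 V), IsMatchingSet G N → coveredVerts N = coveredVerts M → N = M

/-- An `M`-alternating cycle: a cycle whose edges alternate (cyclically)
between `M` and the complement of `M`. -/
def IsAltCycle {V : Type*} (G : SimpleGraph V) (M : Set (Sym2 V)) {v : V}
    (c : G.Walk v v) : Prop :=
  c.IsCycle ∧ List.Chain' (fun e f => (e ∈ M) ↔ ¬ (f ∈ M)) c.edges ∧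
    ∀ e f : Sym2 V, c.edges.head? = some e → c.edges.getLast? = some f →
      ((f ∈ M) ↔ ¬ (e ∈ M))

/-- The graph obtained from `G` by deleting the vertices in `S`
(they remain as isolated vertices). -/
def delVerts {V : Type*} (G : SimpleGraph V) (S : Set V) : SimpleGraph V where
  Adj x y := G.Adj x y ∧ x ∉ S ∧ y ∉ S
  symm := ⟨by rintro x y ⟨h, hx, hy⟩; exact ⟨h.symm, hy, hx⟩⟩
  loopless := ⟨by rintro x ⟨h, -, -⟩; exact G.loopless.irrefl x h⟩

/-- The maximum size of a uniquely restricted matching in `G`. -/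
noncomputable def nuUR {V : Type*} (G : SimpleGraph V) : ℕ :=
  sSup {k | ∃ M : Set (Sym2 V), IsURMatching G M ∧ M.ncard = k}

/-- The matching number of `G`. -/
noncomputable def nuM {V : Type*} (G : SimpleGraph V) : ℕ :=
  sSup {k | ∃ M : Set (Sym2 V), IsMatchingSet G M ∧ M.ncard = k}

/-- A bridge is good if it lies on a path between two vertices of degree at most 2. -/
def IsGoodBridge {V : Type*} [Fintype V] (G : SimpleGraph V) [DecidableRel G.Adj]
    (e : Sym2 V) : Prop :=
  G.IsBridge e ∧ ∃ (x y : V) (p : G.Walk x y),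
    p.IsPath ∧ G.degree x ≤ 2 ∧ G.degree y ≤ 2 ∧ e ∈ p.edges

/-- If `uv ∈ E(G)`, `u` has degree `1` in `G`, and `M'` is a uniquely restricted
matching in `G - {u,v}`, then `M' ∪ {uv}` is a uniquely restricted matching in `G`. -/
theorem stmt8 {V : Type*} [Fintype V] (G : SimpleGraph V) [DecidableRel G.Adj]
    (u v : V) (huv : G.Adj u v) (hu : G.degree u = 1)
    (M' : Set (Sym2 V)) (hM' : IsURMatching (delVerts G {u, v}) M') :
    IsURMatching G (insert s(u, v) M') := by
  obtain ⟨⟨hM'sub, hM'pw⟩, hM'uniq⟩ := hM'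
  have hne : u ≠ v := huv.ne
  have hdeg : ∀ w, G.Adj u w → w = v := by
    intro w hw
    obtain ⟨a, ha⟩ := Finset.card_eq_one.mp hu
    have h1 : w ∈ G.neighborFinset u := (SimpleGraph.mem_neighborFinset G u w).mpr hw
    have h2 : v ∈ G.neighborFinset u := (SimpleGraph.mem_neighborFinset G u v).mpr huv
    rw [ha, Finset.mem_singleton] at h1 h2
    rw [h1, h2]
  have havoid : ∀ e ∈ M', u ∉ e ∧ v ∉ e := by
    intro e he
    have hes := hM'sub he
    induction e using Sym2.ind with
    | _ x y =>
      rw [SimpleGraph.mem_edgeSet] at hes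
      obtain ⟨hadj, hx, hy⟩ := hes
      simp only [Set.mem_insert_iff, Set.mem_singleton_iff, not_or] at hx hy
      constructor <;> intro h <;> rw [Sym2.mem_iff] at h <;>
        rcases h with h | h
      · exact hx.1 h.symm
      · exact hy.1 h.symm
      · exact hx.2 h.symm
      · exact hy.2 h.symm
  have hM'G : ∀ e ∈ M', e ∈ G.edgeSet := by
    intro e he
    have hes := hM'sub he
    induction e using Sym2.ind with
    | _ x y =>
      rw [SimpleGraph.mem_edgeSet] at hes ⊢
      exact hes.1
  constructor
  · constructor
    · intro e he
      rcases he with rfl | he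
      · exact huv
      · exact hM'G e he
    · intro e he f hf hef w hwe hwf
      rcases he with rfl | he <;> rcases hf with rfl | hf
      · exact hef rfl
      · rw [Sym2.mem_iff] at hwe
        rcases hwe with rfl | rfl
        · exact (havoid f hf).1 hwf
        · exact (havoid f hf).2 hwf
      · rw [Sym2.mem_iff] at hwf
        rcases hwf with rfl | rfl
        · exact (havoid e he).1 hwe
        · exact (havoid e he).2 hwe
      · exact hM'pw he hf hef w hwe hwf
  · rintro N ⟨hNsub, hNpw⟩ hNcov
    -- s(u,v) ∈ N
    have huN : u ∈ coveredVerts N := by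
      rw [hNcov]
      exact ⟨s(u, v), Set.mem_insert _ _, Sym2.mem_mk_left u v⟩
    obtain ⟨e, heN, hue⟩ := huN
    have heuv : e = s(u, v) := by
      have hes := hNsub heN
      induction e using Sym2.ind with
      | _ x y =>
        rw [SimpleGraph.mem_edgeSet] at hes
        rw [Sym2.mem_iff] at hue
        rcases hue with rfl | rfl
        · rw [hdeg y hes]
        · rw [hdeg x hes.symm, Sym2.eq_swap]
    subst heuv
    -- N' := N \ {s(u,v)}
    set N' : Set (Sym2 V) := N \ {s(u, v)} with hN'def
    have hN'avoid : ∀ e ∈ N', u ∉ e ∧ v ∉ e := by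
      rintro e ⟨heN', hene⟩
      have := hNpw heN heN' (by simpa using Ne.symm hene)
      exact ⟨fun h => this u (Sym2.mem_mk_left u v) h,
             fun h => this v (Sym2.mem_mk_right u v) h⟩
    have hN'match : IsMatchingSet (delVerts G {u, v}) N' := by
      constructor
      · intro e he
        have hes := hNsub he.1
        have hav := hN'avoid e he
        induction e using Sym2.ind with
        | _ x y =>
          rw [SimpleGraph.mem_edgeSet] at hes ⊢
          refine ⟨hes, ?_, ?_⟩ <;> intro h <;>
            simp only [Set.mem_insert_iff, Set.mem_singleton_iff] at h <;>
            rcases h with rfl | rfl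
          · exact hav.1 (Sym2.mem_mk_left _ _)
          · exact hav.2 (Sym2.mem_mk_left _ _)
          · exact hav.1 (Sym2.mem_mk_right _ _)
          · exact hav.2 (Sym2.mem_mk_right _ _)
      · exact hNpw.mono Set.diff_subset
    have hN'cov : coveredVerts N' = coveredVerts M' := by
      ext x
      constructor
      · rintro ⟨e, heN', hxe⟩
        have hav := hN'avoid e heN'
        have hxN : x ∈ coveredVerts N := ⟨e, heN'.1, hxe⟩
        rw [hNcov] at hxN
        obtain ⟨f, hf, hxf⟩ := hxN
        rcases hf with rfl | hf
        · exfalso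
          rw [Sym2.mem_iff] at hxf
          rcases hxf with rfl | rfl
          · exact hav.1 hxe
          · exact hav.2 hxe
        · exact ⟨f, hf, hxf⟩
      · rintro ⟨e, heM', hxe⟩
        have hav := havoid e heM'
        have hxu : x ≠ u := fun h => hav.1 (h ▸ hxe)
        have hxv : x ≠ v := fun h => hav.2 (h ▸ hxe)
        have hxN : x ∈ coveredVerts N := by
          rw [hNcov]; exact ⟨e, Set.mem_insert_of_mem _ heM', hxe⟩
        obtain ⟨f, hfN, hxf⟩ := hxN
        refine ⟨f, ⟨hfN, ?_⟩, hxf⟩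
        intro h
        rw [Set.mem_singleton_iff] at h
        subst h
        rw [Sym2.mem_iff] at hxf
        rcases hxf with rfl | rfl
        · exact hxu rfl
        · exact hxv rfl
    have hN'eq : N' = M' := hM'uniq N' hN'match hN'cov
    have : insert s(u, v) N' = N := by
      rw [hN'def, Set.insert_diff_singleton, Set.insert_eq_self.mpr heN]
    rw [← this, hN'eq]
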